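/- Every orientation-preserving homeomorphism of the real line admits a square root: there exists an orientation-preserving homeomorphism g with g ∘ g = f. -/

import Mathlib

open Function Set

namespace SqrtHomeo

variable (φ : ℝ ≃o ℝ)

/-! ### Iterates -/

lemma ps_add (n m : ℤ) (x : ℝ) : (φ^(n+m)) x = (φ^n) ((φ^m) x) := by
  rw [zpow_add]; rfl

lemma ps_succ (n : ℤ) (x : ℝ) : (φ^(n+1)) x = (φ^n) (φ x) := by
  rw [zpow_add, zpow_one]; rfl

lemma ps_succ' (n : ℤ) (x : ℝ) : (φ^(n+1)) x = φ ((φ^n) x) := by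
  rw [show n+1 = 1+n by ring, zpow_add, zpow_one]; rfl

lemma ps_cancel (n : ℤ) (x : ℝ) : (φ^n) ((φ^(-n)) x) = x := by
  rw [← ps_add]; simp

lemma ps_cancel' (n : ℤ) (x : ℝ) : (φ^(-n)) ((φ^n) x) = x := by
  rw [← ps_add]; simp

lemma ps_fix {q : ℝ} (h : φ q = q) (n : ℤ) : (φ^n) q = q := by
  induction n using Int.induction_on with
  | zero => simp
  | succ k ih => rw [ps_succ, h, ih]
  | pred k ih =>
      have h2 : (φ^(-(k:ℤ)-1+1)) q = φ ((φ^(-(k:ℤ)-1)) q) := ps_succ' φ _ q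
      rw [show -(k:ℤ)-1+1 = -(k:ℤ) by ring] at h2
      have : φ ((φ^(-(k:ℤ)-1)) q) = φ q := by rw [← h2, ih, h]
      exact φ.injective this

lemma ps_fix_iff {x : ℝ} (n : ℤ) : φ ((φ^n) x) = (φ^n) x ↔ φ x = x := by
  constructor
  · intro h
    have h1 : (φ^n) (φ x) = (φ^n) x := by rw [← ps_succ, ps_succ', h]
    exact (φ^n).injective h1
  · intro h; rw [← ps_succ', ps_succ, h]

/-! ### Same component relation -/

def Same (x y : ℝ) : Prop :=
  ∀ q, φ q = q → ((q < x ↔ q < y) ∧ (x < q ↔ y < q))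

lemma same_refl (x : ℝ) : Same φ x x := fun _ _ => ⟨Iff.rfl, Iff.rfl⟩

lemma same_symm {x y : ℝ} (h : Same φ x y) : Same φ y x := by
  intro q hq; obtain ⟨h1, h2⟩ := h q hq; exact ⟨h1.symm, h2.symm⟩

lemma same_trans {x y z : ℝ} (h : Same φ x y) (h' : Same φ y z) : Same φ x z := by
  intro q hq
  obtain ⟨h1, h2⟩ := h q hq; obtain ⟨h3, h4⟩ := h' q hq
  exact ⟨h1.trans h3, h2.trans h4⟩

lemma same_notfix {x y : ℝ} (hx : φ x ≠ x) (h : Same φ x y) : φ y ≠ y := by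
  intro hy
  obtain ⟨h1, h2⟩ := h y hy
  have hn1 : ¬ y < x := fun hh => absurd (h1.mp hh) (lt_irrefl y)
  have hn2 : ¬ x < y := fun hh => absurd (h2.mp hh) (lt_irrefl y)
  have : x = y := le_antisymm (not_lt.mp hn1) (not_lt.mp hn2)
  exact hx (this ▸ hy)

lemma same_between {u v z : ℝ} (h : Same φ u v) (h1 : u ≤ z) (h2 : z ≤ v) :
    Same φ u z := by
  intro q hq
  obtain ⟨p1, p2⟩ := h q hq
  constructor
  · constructor
    · intro hqu; exact lt_of_lt_of_le hqu h1
    · intro hqz; exact p1.mpr (lt_of_lt_of_le hqz h2)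
  · constructor
    · intro huq; exact lt_of_le_of_lt h2 (p2.mp huq)
    · intro hzq; exact lt_of_le_of_lt h1 hzq

lemma same_apply {x : ℝ} (hx : φ x ≠ x) : Same φ x (φ x) := by
  intro q hq
  constructor
  · constructor
    · intro h; calc q = φ q := hq.symm
        _ < φ x := φ.strictMono h
    · intro h
      by_contra hc
      have : x ≤ q := not_lt.mp hc
      have : φ x ≤ φ q := φ.monotone this
      rw [hq] at this
      exact absurd h (not_lt.mpr this)
  · constructor
    · intro h
      calc φ x < φ q := φ.strictMono h
        _ = q := hq
    · intro h
      by_contra hc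
      have : q ≤ x := not_lt.mp hc
      have : φ q ≤ φ x := φ.monotone this
      rw [hq] at this
      exact absurd h (not_lt.mpr this)

lemma same_ps {x : ℝ} (hx : φ x ≠ x) (n : ℤ) : Same φ x ((φ^n) x) := by
  induction n using Int.induction_on with
  | zero => simpa using same_refl φ x
  | succ k ih =>
      have hk : φ ((φ^(k:ℤ)) x) ≠ (φ^(k:ℤ)) x := fun h => hx ((ps_fix_iff φ _).mp h)
      have := same_apply φ hk
      rw [← ps_succ'] at this
      exact same_trans φ ih this
  | pred k ih =>
      have hk : φ ((φ^(-(k:ℤ)-1)) x) ≠ (φ^(-(k:ℤ)-1)) x := fun h => hx ((ps_fix_iff φ _).mp h)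
      have h2 := same_apply φ hk
      have h3 : φ ((φ^(-(k:ℤ)-1)) x) = (φ^(-(k:ℤ))) x := by
        rw [← ps_succ']; congr 1; ring
      rw [h3] at h2
      exact same_trans φ ih (same_symm φ h2)

/-! ### Fixed points between points of opposite sign -/

lemma fix_between_up {u v : ℝ} (huv : u ≤ v) (hu : u < φ u) (hv : φ v < v) :
    ∃ q, φ q = q ∧ u ≤ q ∧ q ≤ v := by
  have hcont : ContinuousOn (fun z => φ z - z) (Icc u v) :=
    (φ.continuous.sub continuous_id).continuousOn
  have h0 : (0:ℝ) ∈ Icc (φ v - v) (φ u - u) := ⟨by linarith, by linarith⟩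
  obtain ⟨q, hq, hq0⟩ := intermediate_value_Icc' huv hcont h0
  have : φ q - q = 0 := hq0
  exact ⟨q, by linarith, hq.1, hq.2⟩

lemma fix_between_down {u v : ℝ} (huv : u ≤ v) (hu : φ u < u) (hv : v < φ v) :
    ∃ q, φ q = q ∧ u ≤ q ∧ q ≤ v := by
  have hcont : ContinuousOn (fun z => φ z - z) (Icc u v) :=
    (φ.continuous.sub continuous_id).continuousOn
  have h0 : (0:ℝ) ∈ Icc (φ u - u) (φ v - v) := ⟨by linarith, by linarith⟩
  obtain ⟨q, hq, hq0⟩ := intermediate_value_Icc huv hcont h0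
  have : φ q - q = 0 := hq0
  exact ⟨q, by linarith, hq.1, hq.2⟩

lemma same_sign {x y : ℝ} (h : Same φ x y) (hr : x < φ x) : y < φ y := by
  by_contra hc
  have hyne : φ y ≠ y := same_notfix φ (ne_of_gt hr) h
  have hy : φ y < y := lt_of_le_of_ne (not_lt.mp hc) hyne
  rcases le_total x y with hxy | hxy
  · obtain ⟨q, hq, hq1, hq2⟩ := fix_between_up φ hxy hr hy
    have hq1' : x < q := lt_of_le_of_ne hq1 (fun hh => (ne_of_gt hr) (by rw [← hh] at hq; exact hq))
    have h2 := (h q hq).2.mp hq1'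
    have hq2' : q < y := lt_of_le_of_ne hq2 (fun hh => hyne (by rw [hh] at hq; exact hq))
    exact absurd h2 (not_lt.mpr (le_of_lt hq2'))
  · obtain ⟨q, hq, hq1, hq2⟩ := fix_between_down φ hxy hy hr
    have hq2' : q < x := lt_of_le_of_ne hq2 (fun hh => (ne_of_gt hr) (by rw [hh] at hq; exact hq))
    have h2 := (h q hq).1.mp hq2'
    have hq1' : y < q := lt_of_le_of_ne hq1 (fun hh => hyne (by rw [← hh] at hq; exact hq))
    exact absurd h2 (not_lt.mpr (le_of_lt hq1'))

/-! ### Basepoint of a component -/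

def lo (x : ℝ) : Set ℝ := {q | φ q = q ∧ q ≤ x}
def hi (x : ℝ) : Set ℝ := {q | φ q = q ∧ x ≤ q}

open Classical in
noncomputable def base (x : ℝ) : ℝ :=
  if _h1 : (lo φ x).Nonempty then
    if _h2 : (hi φ x).Nonempty then (sSup (lo φ x) + sInf (hi φ x))/2
    else sSup (lo φ x) + 1
  else if _h2 : (hi φ x).Nonempty then sInf (hi φ x) - 1
  else 0

lemma lo_bddAbove (x : ℝ) : BddAbove (lo φ x) := ⟨x, fun _ hq => hq.2⟩
lemma hi_bddBelow (x : ℝ) : BddBelow (hi φ x) := ⟨x, fun _ hq => hq.2⟩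

lemma sSup_lo_fix {x : ℝ} (h1 : (lo φ x).Nonempty) :
    φ (sSup (lo φ x)) = sSup (lo φ x) ∧ sSup (lo φ x) ≤ x := by
  have himg : ⇑φ '' (lo φ x) = lo φ x := by
    ext y
    constructor
    · rintro ⟨q, hq, rfl⟩; rw [hq.1]; exact hq
    · intro hy; exact ⟨y, hy, hy.1⟩
  constructor
  · rw [φ.map_csSup' h1 (lo_bddAbove φ x), himg]
  · exact csSup_le h1 (fun q hq => hq.2)

lemma sInf_hi_fix {x : ℝ} (h2 : (hi φ x).Nonempty) :
    φ (sInf (hi φ x)) = sInf (hi φ x) ∧ x ≤ sInf (hi φ x) := by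
  have himg : ⇑φ '' (hi φ x) = hi φ x := by
    ext y
    constructor
    · rintro ⟨q, hq, rfl⟩; rw [hq.1]; exact hq
    · intro hy; exact ⟨y, hy, hy.1⟩
  constructor
  · rw [φ.map_csInf' h2 (hi_bddBelow φ x), himg]
  · exact le_csInf h2 (fun q hq => hq.2)

lemma base_same {x : ℝ} (hx : φ x ≠ x) : Same φ x (base φ x) := by
  intro q hq
  have hqx : q ≠ x := fun hh => hx (hh ▸ hq)
  unfold base
  by_cases h1 : (lo φ x).Nonempty
  · obtain ⟨ha, hax⟩ := sSup_lo_fix φ h1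
    set a := sSup (lo φ x) with hadef
    have hax' : a < x := lt_of_le_of_ne hax (fun hh => hx (hh ▸ ha))
    have hub : ∀ p, φ p = p → p ≤ x → p ≤ a := fun p hp hpx =>
      le_csSup (lo_bddAbove φ x) ⟨hp, hpx⟩
    by_cases h2 : (hi φ x).Nonempty
    · obtain ⟨hb, hxb⟩ := sInf_hi_fix φ h2
      set b := sInf (hi φ x) with hbdef
      have hxb' : x < b := lt_of_le_of_ne hxb (fun hh => hx (hh.symm ▸ hb))
      have hlb : ∀ p, φ p = p → x ≤ p → b ≤ p := fun p hp hpx =>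
        csInf_le (hi_bddBelow φ x) ⟨hp, hpx⟩
      rw [dif_pos h1, dif_pos h2]
      have hab : a < b := lt_trans hax' hxb'
      have hc1 : a < (a + b)/2 := by linarith
      have hc2 : (a + b)/2 < b := by linarith
      constructor
      · constructor
        · intro hqlt
          have : q ≤ a := hub q hq (le_of_lt hqlt)
          linarith
        · intro hqlt
          by_contra hcc
          have hxq : x ≤ q := not_lt.mp hcc
          have : b ≤ q := hlb q hq hxq
          linarith
      · constructor
        · intro hlt
          have : b ≤ q := hlb q hq (le_of_lt hlt)
          linarith
        · intro hlt
          by_contra hcc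
          have : q ≤ a := hub q hq (not_lt.mp hcc)
          linarith
    · -- no fixed point ≥ x : every fixed point is < x
      have hall : ∀ p, φ p = p → p < x := by
        intro p hp
        by_contra hcc
        exact h2 ⟨p, hp, not_lt.mp hcc⟩
      rw [dif_pos h1, dif_neg h2]
      have hqa : q ≤ a := hub q hq (le_of_lt (hall q hq))
      constructor
      · constructor
        · intro _; linarith
        · intro _; exact hall q hq
      · constructor
        · intro hlt; exact absurd (hall q hq) (not_lt.mpr (le_of_lt hlt))
        · intro hlt; linarith
  · have hall : ∀ p, φ p = p → x < p := by
      intro p hp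
      by_contra hcc
      exact h1 ⟨p, hp, not_lt.mp hcc⟩
    rw [dif_neg h1]
    by_cases h2 : (hi φ x).Nonempty
    · obtain ⟨hb, hxb⟩ := sInf_hi_fix φ h2
      set b := sInf (hi φ x) with hbdef
      have hlb : ∀ p, φ p = p → x ≤ p → b ≤ p := fun p hp hpx =>
        csInf_le (hi_bddBelow φ x) ⟨hp, hpx⟩
      rw [dif_pos h2]
      have hqb : b ≤ q := hlb q hq (le_of_lt (hall q hq))
      constructor
      · constructor
        · intro hlt; exact absurd (hall q hq) (not_lt.mpr (le_of_lt hlt))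
        · intro hlt; linarith
      · constructor
        · intro _; linarith
        · intro _; exact hall q hq
    · exfalso
      rcases le_total q x with hh | hh
      · exact h1 ⟨q, hq, hh⟩
      · exact h2 ⟨q, hq, hh⟩

lemma base_notfix {x : ℝ} (hx : φ x ≠ x) : φ (base φ x) ≠ base φ x :=
  same_notfix φ hx (base_same φ hx)

lemma base_congr {x y : ℝ} (hx : φ x ≠ x) (h : Same φ x y) : base φ x = base φ y := by
  have hy : φ y ≠ y := same_notfix φ hx h
  have hlo : lo φ x = lo φ y := by
    ext q
    constructor
    · rintro ⟨hq, hqx⟩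
      refine ⟨hq, ?_⟩
      have : q < x := lt_of_le_of_ne hqx (fun hh => hx (hh ▸ hq))
      exact le_of_lt ((h q hq).1.mp this)
    · rintro ⟨hq, hqy⟩
      refine ⟨hq, ?_⟩
      have : q < y := lt_of_le_of_ne hqy (fun hh => hy (hh ▸ hq))
      exact le_of_lt ((h q hq).1.mpr this)
  have hhi : hi φ x = hi φ y := by
    ext q
    constructor
    · rintro ⟨hq, hqx⟩
      refine ⟨hq, ?_⟩
      have : x < q := lt_of_le_of_ne hqx (fun hh => hx (hh.symm ▸ hq))
      exact le_of_lt ((h q hq).2.mp this)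
    · rintro ⟨hq, hqy⟩
      refine ⟨hq, ?_⟩
      have : y < q := lt_of_le_of_ne hqy (fun hh => hy (hh.symm ▸ hq))
      exact le_of_lt ((h q hq).2.mpr this)
  unfold base
  rw [hlo, hhi]

/-! ### Orbit index -/

lemma orbit_mono {c : ℝ} (hc : c < φ c) : StrictMono (fun n : ℤ => (φ^n) c) := by
  apply strictMono_int_of_lt_succ
  intro n
  have : (φ^n) c < (φ^n) (φ c) := (φ^n).strictMono hc
  rwa [← ps_succ] at this

lemma orbit_sup_fix {c : ℝ} (hb : BddAbove (Set.range fun n : ℤ => (φ^n) c)) :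
    φ (sSup (Set.range fun n : ℤ => (φ^n) c)) = sSup (Set.range fun n : ℤ => (φ^n) c) := by
  have hne : (Set.range fun n : ℤ => (φ^n) c).Nonempty := ⟨c, 0, by simp⟩
  rw [φ.map_csSup' hne hb]
  congr 1
  ext y
  constructor
  · rintro ⟨z, ⟨n, rfl⟩, rfl⟩
    exact ⟨n + 1, ps_succ' φ n c⟩
  · rintro ⟨n, rfl⟩
    refine ⟨(φ^(n-1)) c, ⟨n-1, rfl⟩, ?_⟩
    rw [← ps_succ']
    congr 1
    ring
lemma orbit_inf_fix {c : ℝ} (hb : BddBelow (Set.range fun n : ℤ => (φ^n) c)) :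
    φ (sInf (Set.range fun n : ℤ => (φ^n) c)) = sInf (Set.range fun n : ℤ => (φ^n) c) := by
  have hne : (Set.range fun n : ℤ => (φ^n) c).Nonempty := ⟨c, 0, by simp⟩
  rw [φ.map_csInf' hne hb]
  congr 1
  ext y
  constructor
  · rintro ⟨z, ⟨n, rfl⟩, rfl⟩
    exact ⟨n + 1, ps_succ' φ n c⟩
  · rintro ⟨n, rfl⟩
    refine ⟨(φ^(n-1)) c, ⟨n-1, rfl⟩, ?_⟩
    rw [← ps_succ']
    congr 1
    ring

lemma idx_exists {x : ℝ} (hx : x < φ x) :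
    ∃ n : ℤ, (φ^n) (base φ x) ≤ x ∧ x < (φ^(n+1)) (base φ x) := by
  have hxne : φ x ≠ x := ne_of_gt hx
  have hsx : Same φ x (base φ x) := base_same φ hxne
  set c := base φ x with hcdef
  have hc : c < φ c := same_sign φ hsx hx
  have hA : ∃ n : ℤ, (φ^n) c ≤ x := by
    by_contra hno
    push_neg at hno
    have hbdd : BddBelow (Set.range fun n : ℤ => (φ^n) c) :=
      ⟨x, by rintro y ⟨n, rfl⟩; exact le_of_lt (hno n)⟩
    set s := sInf (Set.range fun n : ℤ => (φ^n) c) with hsdef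
    have hsfix : φ s = s := orbit_inf_fix φ hbdd
    have hxs : x ≤ s := le_csInf ⟨c, 0, by simp⟩ (by rintro y ⟨n, rfl⟩; exact le_of_lt (hno n))
    have hsc : s ≤ c := csInf_le hbdd ⟨0, by simp⟩
    have hxs' : x < s := lt_of_le_of_ne hxs (fun hh => hxne (hh ▸ hsfix))
    have := (hsx s hsfix).2.mp hxs'
    exact absurd this (not_lt.mpr hsc)
  have hB : ∃ m : ℤ, ¬ (φ^m) c ≤ x := by
    by_contra hno
    push_neg at hno
    have hbdd : BddAbove (Set.range fun n : ℤ => (φ^n) c) :=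
      ⟨x, by rintro y ⟨n, rfl⟩; exact hno n⟩
    set s := sSup (Set.range fun n : ℤ => (φ^n) c) with hsdef
    have hsfix : φ s = s := orbit_sup_fix φ hbdd
    have hsx' : s ≤ x := csSup_le ⟨c, 0, by simp⟩ (by rintro y ⟨n, rfl⟩; exact hno n)
    have hcs : c ≤ s := le_csSup hbdd ⟨0, by simp⟩
    have hsx'' : s < x := lt_of_le_of_ne hsx' (fun hh => hxne (hh ▸ hsfix))
    have := (hsx s hsfix).1.mp hsx''
    exact absurd this (not_lt.mpr hcs)
  obtain ⟨m, hm⟩ := hB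
  have hbddA : ∃ b : ℤ, ∀ z : ℤ, (φ^z) c ≤ x → z ≤ b := by
    refine ⟨m, fun z hz => ?_⟩
    by_contra hcc
    push_neg at hcc
    exact hm (le_of_lt (lt_of_lt_of_le ((orbit_mono φ hc) hcc) hz))
  obtain ⟨n, hn, hmax⟩ := Int.exists_greatest_of_bdd hbddA hA
  refine ⟨n, hn, ?_⟩
  by_contra hcc
  push_neg at hcc
  have := hmax (n+1) hcc
  omega

open Classical in
noncomputable def idx (x : ℝ) : ℤ :=
  if h : ∃ n : ℤ, (φ^n) (base φ x) ≤ x ∧ x < (φ^(n+1)) (base φ x) then h.choose else 0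

lemma idx_spec {x : ℝ} (hx : x < φ x) :
    (φ^(idx φ x)) (base φ x) ≤ x ∧ x < (φ^(idx φ x + 1)) (base φ x) := by
  have h := idx_exists φ hx
  rw [idx, dif_pos h]
  exact h.choose_spec

lemma idx_eq {x : ℝ} (hx : x < φ x) {n : ℤ}
    (h1 : (φ^n) (base φ x) ≤ x) (h2 : x < (φ^(n+1)) (base φ x)) : idx φ x = n := by
  have hxne : φ x ≠ x := ne_of_gt hx
  have hc : base φ x < φ (base φ x) := same_sign φ (base_same φ hxne) hx
  have hmono := orbit_mono φ hc
  obtain ⟨hs1, hs2⟩ := idx_spec φ hx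
  set m := idx φ x with hmdef
  rcases lt_trichotomy m n with h | h | h
  · exfalso
    have : (φ^(m+1)) (base φ x) ≤ (φ^n) (base φ x) := hmono.monotone (by omega)
    linarith
  · exact h
  · exfalso
    have : (φ^(n+1)) (base φ x) ≤ (φ^m) (base φ x) := hmono.monotone (by omega)
    linarith

/-! ### The square root on a rising component -/

noncomputable def hstep (c t : ℝ) : ℝ :=
  if t < c + (φ c - c)/2 then t + (φ c - c)/2 else φ (t - (φ c - c)/2)

noncomputable def rsqrt (x : ℝ) : ℝ :=
  (φ^(idx φ x)) (hstep φ (base φ x) ((φ^(-(idx φ x))) x))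

lemma t_bounds {x : ℝ} (hx : x < φ x) :
    base φ x ≤ (φ^(-(idx φ x))) x ∧ (φ^(-(idx φ x))) x < φ (base φ x) := by
  obtain ⟨hs1, hs2⟩ := idx_spec φ hx
  constructor
  · have h := (φ^(-(idx φ x))).monotone hs1
    rwa [ps_cancel'] at h
  · have h := (φ^(-(idx φ x))).strictMono hs2
    rw [← ps_add, show -(idx φ x) + (idx φ x + 1) = 1 by ring, zpow_one] at h
    exact h

lemma rsqrt_core {x : ℝ} (hx : x < φ x) :
    Same φ x (rsqrt φ x)
    ∧ (φ^(idx φ x)) (base φ x + (φ (base φ x) - base φ x)/2) ≤ rsqrt φ x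
    ∧ rsqrt φ x < (φ^(idx φ x + 1)) (base φ x + (φ (base φ x) - base φ x)/2)
    ∧ rsqrt φ (rsqrt φ x) = φ x := by
  have hxne : φ x ≠ x := ne_of_gt hx
  have hsxc : Same φ x (base φ x) := base_same φ hxne
  set c := base φ x with hcdef
  have hcne : φ c ≠ c := base_notfix φ hxne
  have hc : c < φ c := same_sign φ hsxc hx
  set e := (φ c - c)/2 with hedef
  have he : 0 < e := by rw [hedef]; linarith
  have hphic : φ c = c + 2*e := by rw [hedef]; ring
  set n := idx φ x with hndef
  set t := (φ^(-n)) x with htdef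
  have hxt : (φ^n) t = x := by rw [htdef]; exact ps_cancel φ n x
  obtain ⟨htc, htfc⟩ := t_bounds φ hx
  rw [← hcdef, ← hndef, ← htdef] at htc htfc
  have hrs : rsqrt φ x = (φ^n) (hstep φ c t) := by
    unfold rsqrt; rw [← hndef, ← hcdef, ← htdef]
  have hd : c < c + e := by linarith
  have hde : c + e < φ c := by rw [hphic]; linarith
  have hsame_cd : Same φ c (c+e) :=
    same_between φ (same_apply φ hcne) (le_of_lt hd) (le_of_lt hde)
  have hdrise : c + e < φ (c + e) := same_sign φ hsame_cd hc
  have hv1 : c + e ≤ hstep φ c t ∧ hstep φ c t < φ (c + e) := by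
    unfold hstep
    rw [← hedef]
    split_ifs with hcase
    · constructor
      · linarith
      · have h2 := φ.monotone (le_of_lt hd)
        linarith
    · push_neg at hcase
      constructor
      · have h2 := φ.monotone (show c ≤ t - e by linarith)
        linarith
      · exact φ.strictMono (by linarith)
  have l1 : (φ^n) (c+e) ≤ rsqrt φ x := by
    rw [hrs]; exact (φ^n).monotone hv1.1
  have u1 : rsqrt φ x < (φ^(n+1)) (c+e) := by
    rw [hrs, ps_succ]; exact (φ^n).strictMono hv1.2
  have hn2 : (φ^(n+2)) c = (φ^(n+1)) (φ c) := by
    rw [show n+2 = (n+1)+1 by ring, ps_succ]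
  have lo2 : (φ^n) c ≤ rsqrt φ x := le_trans ((φ^n).monotone (le_of_lt hd)) l1
  have hi2 : rsqrt φ x ≤ (φ^(n+2)) c := by
    have h2 := (φ^(n+1)).monotone (le_of_lt hde)
    rw [← hn2] at h2
    exact le_trans (le_of_lt u1) h2
  have hSame_orbit : Same φ ((φ^n) c) ((φ^(n+2)) c) :=
    same_trans φ (same_symm φ (same_ps φ hcne n)) (same_ps φ hcne (n+2))
  have hbet : Same φ ((φ^n) c) (rsqrt φ x) := same_between φ hSame_orbit lo2 hi2
  have hSamexy : Same φ x (rsqrt φ x) :=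
    same_trans φ (same_trans φ hsxc (same_ps φ hcne n)) hbet
  refine ⟨hSamexy, l1, u1, ?_⟩
  -- now the functional equation
  have hyne : φ (rsqrt φ x) ≠ rsqrt φ x := same_notfix φ hxne hSamexy
  have hy : rsqrt φ x < φ (rsqrt φ x) := same_sign φ hSamexy hx
  have hbase_y : base φ (rsqrt φ x) = c := by
    rw [hcdef]; exact (base_congr φ hxne hSamexy).symm
  by_cases hcase : t < c + e
  · have hveq : rsqrt φ x = (φ^n) (t + e) := by
      rw [hrs]; congr 1; unfold hstep; rw [← hedef, if_pos hcase]
    have hidxy : idx φ (rsqrt φ x) = n := by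
      apply idx_eq φ hy
      · rw [hbase_y, hveq]
        exact (φ^n).monotone (by linarith)
      · rw [hbase_y, hveq, ps_succ]
        exact (φ^n).strictMono (by linarith)
    have hcanc : (φ^(-n)) (rsqrt φ x) = t + e := by
      rw [hveq, ps_cancel']
    have hstepval : hstep φ c (t + e) = φ t := by
      unfold hstep; rw [← hedef, if_neg (by linarith)]
      congr 1; ring
    have hry : rsqrt φ (rsqrt φ x)
        = (φ^(idx φ (rsqrt φ x))) (hstep φ (base φ (rsqrt φ x))
            ((φ^(-(idx φ (rsqrt φ x)))) (rsqrt φ x))) := rfl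
    rw [hidxy, hbase_y, hcanc, hstepval] at hry
    rw [hry, ← ps_succ, ← hxt, ← ps_succ']
  · push_neg at hcase
    have hveq : rsqrt φ x = (φ^(n+1)) (t - e) := by
      rw [hrs, ps_succ]; congr 1; unfold hstep
      rw [← hedef, if_neg (not_lt.mpr hcase)]
    have hs_c : c ≤ t - e := by linarith
    have hs_d : t - e < c + e := by linarith
    have hidxy : idx φ (rsqrt φ x) = n + 1 := by
      apply idx_eq φ hy
      · rw [hbase_y, hveq]
        exact (φ^(n+1)).monotone hs_c
      · rw [hbase_y, hveq, show (φ^(n+1+1)) c = (φ^(n+1)) (φ c) from ps_succ φ (n+1) c]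
        exact (φ^(n+1)).strictMono (by linarith)
    have hcanc : (φ^(-(n+1))) (rsqrt φ x) = t - e := by
      rw [hveq, ps_cancel']
    have hstepval : hstep φ c (t - e) = t := by
      unfold hstep; rw [← hedef, if_pos hs_d]
      ring
    have hry : rsqrt φ (rsqrt φ x)
        = (φ^(idx φ (rsqrt φ x))) (hstep φ (base φ (rsqrt φ x))
            ((φ^(-(idx φ (rsqrt φ x)))) (rsqrt φ x))) := rfl
    rw [hidxy, hbase_y, hcanc, hstepval] at hry
    rw [hry, ← hxt, ← ps_succ']

lemma rsqrt_same {x : ℝ} (hx : x < φ x) : Same φ x (rsqrt φ x) := (rsqrt_core φ hx).1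

lemma rsqrt_rsqrt {x : ℝ} (hx : x < φ x) : rsqrt φ (rsqrt φ x) = φ x :=
  (rsqrt_core φ hx).2.2.2

lemma rsqrt_mono {x y : ℝ} (hx : x < φ x) (hy : y < φ y) (hxy : x < y)
    (hs : Same φ x y) : rsqrt φ x < rsqrt φ y := by
  have hxne : φ x ≠ x := ne_of_gt hx
  have hbase : base φ x = base φ y := base_congr φ hxne hs
  have hsxc : Same φ x (base φ x) := base_same φ hxne
  set c := base φ x with hcdef
  have hcne : φ c ≠ c := base_notfix φ hxne
  have hc : c < φ c := same_sign φ hsxc hx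
  set e := (φ c - c)/2 with hedef
  have he : 0 < e := by rw [hedef]; linarith
  have hphic : φ c = c + 2*e := by rw [hedef]; ring
  have hd : c < c + e := by linarith
  have hde : c + e < φ c := by rw [hphic]; linarith
  have hsame_cd : Same φ c (c+e) :=
    same_between φ (same_apply φ hcne) (le_of_lt hd) (le_of_lt hde)
  have hdrise : c + e < φ (c + e) := same_sign φ hsame_cd hc
  set nx := idx φ x with hnxdef
  set ny := idx φ y with hnydef
  obtain ⟨hsx1, hsx2⟩ := idx_spec φ hx
  obtain ⟨hsy1, hsy2⟩ := idx_spec φ hy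
  rw [← hbase] at hsy1 hsy2
  rw [← hcdef, ← hnxdef] at hsx1 hsx2
  rw [← hnydef] at hsy1 hsy2
  have hmonorb := orbit_mono φ hc
  have hnxy : nx ≤ ny := by
    by_contra hcc
    push_neg at hcc
    have h2 : (φ^(ny+1)) c ≤ (φ^nx) c := hmonorb.monotone (by omega)
    linarith
  rcases eq_or_lt_of_le hnxy with heq | hlt
  · -- same index
    obtain ⟨htcx, htfcx⟩ := t_bounds φ hx
    obtain ⟨htcy, htfcy⟩ := t_bounds φ hy
    rw [← hcdef, ← hnxdef] at htcx htfcx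
    rw [← hbase, ← hnydef] at htcy htfcy
    rw [← heq] at htcy htfcy
    set tx := (φ^(-nx)) x with htxdef
    set ty := (φ^(-nx)) y with htydef
    have hts : tx < ty := (φ^(-nx)).strictMono hxy
    have hrsx : rsqrt φ x = (φ^nx) (hstep φ c tx) := by
      unfold rsqrt; rw [← hnxdef, ← hcdef, ← htxdef]
    have hrsy : rsqrt φ y = (φ^nx) (hstep φ c ty) := by
      unfold rsqrt; rw [← hnydef, ← hbase, ← heq, ← htydef]
    rw [hrsx, hrsy]
    apply (φ^nx).strictMono
    unfold hstep
    rw [← hedef]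
    split_ifs with h1 h2 h2
    · linarith
    · push_neg at h2
      have h3 := φ.monotone (show c ≤ ty - e by linarith)
      linarith
    · push_neg at h1
      linarith
    · exact φ.strictMono (by linarith)
  · -- different indices
    obtain ⟨_, _, hu1, _⟩ := rsqrt_core φ hx
    obtain ⟨_, hl1, _, _⟩ := rsqrt_core φ hy
    rw [← hcdef, ← hnxdef, ← hedef] at hu1
    rw [← hbase, ← hnydef, ← hedef] at hl1
    have hmid : (φ^(nx+1)) (c+e) ≤ (φ^ny) (c+e) :=
      (orbit_mono φ hdrise).monotone (by omega)
    calc rsqrt φ x < (φ^(nx+1)) (c+e) := hu1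
      _ ≤ (φ^ny) (c+e) := hmid
      _ ≤ rsqrt φ y := hl1

/-! ### Negation conjugation (for falling components) -/

def negc : ℝ ≃o ℝ :=
{ toFun := fun x => -φ (-x)
  invFun := fun x => -φ.symm (-x)
  left_inv := fun x => by simp
  right_inv := fun x => by simp
  map_rel_iff' := by intro a b; simp }

lemma negc_apply (x : ℝ) : negc φ x = -φ (-x) := rfl

lemma negc_fix_iff {q : ℝ} : negc φ q = q ↔ φ (-q) = -q := by
  rw [negc_apply]
  constructor <;> intro h <;> linarith

lemma same_negc {x y : ℝ} (h : Same φ x y) : Same (negc φ) (-x) (-y) := by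
  intro q hq
  have hq' : φ (-q) = -q := (negc_fix_iff φ).mp hq
  obtain ⟨h1, h2⟩ := h (-q) hq'
  constructor
  · constructor
    · intro hh; rw [lt_neg] at hh ⊢; exact h2.mp hh
    · intro hh; rw [lt_neg] at hh ⊢; exact h2.mpr hh
  · constructor
    · intro hh; rw [neg_lt] at hh ⊢; exact h1.mp hh
    · intro hh; rw [neg_lt] at hh ⊢; exact h1.mpr hh

lemma same_negc' {x y : ℝ} (h : Same (negc φ) x y) : Same φ (-x) (-y) := by
  intro q hq
  have hq' : negc φ (-q) = -q := by
    rw [negc_fix_iff, neg_neg]; exact hq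
  obtain ⟨h1, h2⟩ := h (-q) hq'
  constructor
  · constructor
    · intro hh; rw [lt_neg] at hh ⊢; exact h2.mp hh
    · intro hh; rw [lt_neg] at hh ⊢; exact h2.mpr hh
  · constructor
    · intro hh; rw [neg_lt] at hh ⊢; exact h1.mp hh
    · intro hh; rw [neg_lt] at hh ⊢; exact h1.mpr hh

/-! ### The global square root -/

open Classical in
noncomputable def sqrtf (x : ℝ) : ℝ :=
  if φ x = x then x else if x < φ x then rsqrt φ x else -(rsqrt (negc φ) (-x))

lemma sqrtf_fix {x : ℝ} (h : φ x = x) : sqrtf φ x = x := by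
  unfold sqrtf; rw [if_pos h]

lemma sqrtf_same {x : ℝ} (hne : φ x ≠ x) : Same φ x (sqrtf φ x) := by
  unfold sqrtf
  rw [if_neg hne]
  by_cases hx : x < φ x
  · rw [if_pos hx]; exact rsqrt_same φ hx
  · rw [if_neg hx]
    have hxf : φ x < x := lt_of_le_of_ne (not_lt.mp hx) hne
    have hrise : -x < negc φ (-x) := by
      rw [negc_apply, neg_neg]; exact neg_lt_neg hxf
    have h := rsqrt_same (negc φ) hrise
    have h2 := same_negc' φ h
    rwa [neg_neg] at h2

lemma sqrtf_sqrtf (x : ℝ) : sqrtf φ (sqrtf φ x) = φ x := by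
  by_cases hfix : φ x = x
  · rw [sqrtf_fix φ hfix, sqrtf_fix φ hfix, hfix]
  by_cases hx : x < φ x
  · have h1 : sqrtf φ x = rsqrt φ x := by
      unfold sqrtf; rw [if_neg hfix, if_pos hx]
    have hsame := rsqrt_same φ hx
    have hyne : φ (rsqrt φ x) ≠ rsqrt φ x := same_notfix φ hfix hsame
    have hyr : rsqrt φ x < φ (rsqrt φ x) := same_sign φ hsame hx
    rw [h1]
    unfold sqrtf
    rw [if_neg hyne, if_pos hyr]
    exact rsqrt_rsqrt φ hx
  · have hxf : φ x < x := lt_of_le_of_ne (not_lt.mp hx) hfix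
    have hrise : -x < negc φ (-x) := by
      rw [negc_apply, neg_neg]; exact neg_lt_neg hxf
    have h1 : sqrtf φ x = -(rsqrt (negc φ) (-x)) := by
      unfold sqrtf; rw [if_neg hfix, if_neg hx]
    have hsame : Same (negc φ) (-x) (rsqrt (negc φ) (-x)) := rsqrt_same (negc φ) hrise
    have hzne : negc φ (rsqrt (negc φ) (-x)) ≠ rsqrt (negc φ) (-x) :=
      same_notfix (negc φ) (ne_of_gt hrise) hsame
    have hzr : rsqrt (negc φ) (-x) < negc φ (rsqrt (negc φ) (-x)) :=
      same_sign (negc φ) hsame hrise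
    have hfix2 : φ (-(rsqrt (negc φ) (-x))) ≠ -(rsqrt (negc φ) (-x)) := by
      intro hh
      apply hzne
      rw [negc_apply, hh, neg_neg]
    have hphiz : φ (-(rsqrt (negc φ) (-x))) = -(negc φ (rsqrt (negc φ) (-x))) := by
      rw [negc_apply, neg_neg]
    have hfall2 : ¬ (-(rsqrt (negc φ) (-x)) < φ (-(rsqrt (negc φ) (-x)))) := by
      rw [hphiz]
      intro hh
      rw [neg_lt_neg_iff] at hh
      exact absurd hh (not_lt.mpr (le_of_lt hzr))
    rw [h1]
    unfold sqrtf
    rw [if_neg hfix2, if_neg hfall2, neg_neg]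
    have h3 : rsqrt (negc φ) (rsqrt (negc φ) (-x)) = negc φ (-x) := rsqrt_rsqrt (negc φ) hrise
    rw [h3, negc_apply, neg_neg, neg_neg]

lemma sqrtf_mono : StrictMono (sqrtf φ) := by
  intro x y hxy
  by_cases hfx : φ x = x <;> by_cases hfy : φ y = y
  · rw [sqrtf_fix φ hfx, sqrtf_fix φ hfy]; exact hxy
  · rw [sqrtf_fix φ hfx]
    exact ((sqrtf_same φ hfy) x hfx).1.mp hxy
  · rw [sqrtf_fix φ hfy]
    exact ((sqrtf_same φ hfx) y hfy).2.mp hxy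
  · by_cases hs : Same φ x y
    · by_cases hx : x < φ x
      · have hy : y < φ y := same_sign φ hs hx
        have e1 : sqrtf φ x = rsqrt φ x := by
          unfold sqrtf; rw [if_neg hfx, if_pos hx]
        have e2 : sqrtf φ y = rsqrt φ y := by
          unfold sqrtf; rw [if_neg hfy, if_pos hy]
        rw [e1, e2]
        exact rsqrt_mono φ hx hy hxy hs
      · have hxf : φ x < x := lt_of_le_of_ne (not_lt.mp hx) hfx
        have hy : ¬ y < φ y := fun hh => hx (same_sign φ (same_symm φ hs) hh)
        have hyf : φ y < y := lt_of_le_of_ne (not_lt.mp hy) hfy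
        have e1 : sqrtf φ x = -(rsqrt (negc φ) (-x)) := by
          unfold sqrtf; rw [if_neg hfx, if_neg hx]
        have e2 : sqrtf φ y = -(rsqrt (negc φ) (-y)) := by
          unfold sqrtf; rw [if_neg hfy, if_neg hy]
        rw [e1, e2]
        apply neg_lt_neg
        have hrisex : -x < negc φ (-x) := by
          rw [negc_apply, neg_neg]; exact neg_lt_neg hxf
        have hrisey : -y < negc φ (-y) := by
          rw [negc_apply, neg_neg]; exact neg_lt_neg hyf
        exact rsqrt_mono (negc φ) hrisey hrisex (neg_lt_neg hxy)
          (same_negc φ (same_symm φ hs))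
    · -- different components: a fixed point lies strictly between x and y
      unfold Same at hs
      push_neg at hs
      obtain ⟨q, hq, hnot⟩ := hs
      have hqx : q ≠ x := fun h => hfx (h ▸ hq)
      have hqy : q ≠ y := fun h => hfy (h ▸ hq)
      have hbetween : x < q ∧ q < y := by
        rcases lt_trichotomy x q with h1 | h1 | h1
        · rcases lt_trichotomy q y with h2 | h2 | h2
          · exact ⟨h1, h2⟩
          · exact absurd h2 hqy
          · exfalso
            have hiff : q < x ↔ q < y := by
              constructor
              · intro hh; exact absurd h1 (not_lt.mpr (le_of_lt hh))
              · intro hh; exact absurd h2 (not_lt.mpr (le_of_lt hh))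
            rcases hnot hiff with ⟨hA, hB⟩ | ⟨hA, hB⟩
            · linarith
            · linarith
        · exact absurd h1.symm hqx
        · exfalso
          have hiff : q < x ↔ q < y := ⟨fun _ => lt_trans h1 hxy, fun _ => h1⟩
          rcases hnot hiff with ⟨hA, hB⟩ | ⟨hA, hB⟩
          · linarith
          · linarith
      have h1 : sqrtf φ x < q := ((sqrtf_same φ hfx) q hq).2.mp hbetween.1
      have h2 : q < sqrtf φ y := ((sqrtf_same φ hfy) q hq).1.mp hbetween.2
      exact lt_trans h1 h2

end SqrtHomeo

theorem homeo_has_square_root (f : ℝ → ℝ)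
    (hmono : StrictMono f) (hbij : Function.Bijective f) :
    ∃ g : ℝ → ℝ, StrictMono g ∧ Function.Bijective g ∧ g ∘ g = f := by
  set φ : ℝ ≃o ℝ := StrictMono.orderIsoOfSurjective f hmono hbij.2 with hφ
  have hco : ∀ x, φ x = f x := fun x => rfl
  refine ⟨SqrtHomeo.sqrtf φ, SqrtHomeo.sqrtf_mono φ, ⟨(SqrtHomeo.sqrtf_mono φ).injective, ?_⟩, ?_⟩
  · intro y
    refine ⟨SqrtHomeo.sqrtf φ (φ.symm y), ?_⟩
    rw [SqrtHomeo.sqrtf_sqrtf φ (φ.symm y)]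
    exact φ.apply_symm_apply y
  · funext x
    have := SqrtHomeo.sqrtf_sqrtf φ x
    rw [hco] at this
    exact this
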